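/- Let K : [0, 1] → ℝ be continuous with K(r) ≤ 0 for all r ∈ [0, 1], and let h : [0, 1] → ℝ be twice continuously differentiable with h''(r) + K(r)h(r) = 0 on [0, 1], h(0) = 1, and h(1) = 0. Then 0 ≤ h(r) ≤ 1 − r for all r ∈ [0, 1], and −1 ≤ h'(1) ≤ 0. -/

import Mathlib

open Set Filter Topology

/-- Scalar core of the mixed-derivative bound for the phase function: for
`h'' + Kh = 0` on `[0, 1]` with nonpositive `K`, `h(0) = 1`, `h(1) = 0`, one has
`0 ≤ h(r) ≤ 1 - r` and `-1 ≤ h'(1) ≤ 0`. -/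
theorem stmt_11 (K h h' h'' : ℝ → ℝ)
    (hK : ContinuousOn K (Set.Icc 0 1))
    (hKneg : ∀ r ∈ Set.Icc (0 : ℝ) 1, K r ≤ 0)
    (hh : ∀ r ∈ Set.Icc (0 : ℝ) 1, HasDerivWithinAt h (h' r) (Set.Icc 0 1) r)
    (hh' : ∀ r ∈ Set.Icc (0 : ℝ) 1, HasDerivWithinAt h' (h'' r) (Set.Icc 0 1) r)
    (hh'' : ContinuousOn h'' (Set.Icc 0 1))
    (heq : ∀ r ∈ Set.Icc (0 : ℝ) 1, h'' r + K r * h r = 0)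
    (h0 : h 0 = 1) (h1 : h 1 = 0) :
    (∀ r ∈ Set.Icc (0 : ℝ) 1, 0 ≤ h r ∧ h r ≤ 1 - r) ∧
      -1 ≤ h' 1 ∧ h' 1 ≤ 0 := by
  have hcont : ContinuousOn h (Icc 0 1) := fun r hr => (hh r hr).continuousWithinAt
  -- derivatives at interior points
  have hdh : ∀ x ∈ Ioo (0:ℝ) 1, HasDerivAt h (h' x) x := by
    intro x hx
    exact (hh x (Ioo_subset_Icc_self hx)).hasDerivAt
      (Icc_mem_nhds hx.1 hx.2)
  have hdh' : ∀ x ∈ Ioo (0:ℝ) 1, HasDerivAt h' (h'' x) x := by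
    intro x hx
    exact (hh' x (Ioo_subset_Icc_self hx)).hasDerivAt
      (Icc_mem_nhds hx.1 hx.2)
  have heq' : ∀ r ∈ Icc (0:ℝ) 1, h'' r = -(K r * h r) := by
    intro r hr; linarith [heq r hr]
  -- Step 1: h ≥ 0 on [0,1]
  have hnonneg : ∀ r ∈ Icc (0:ℝ) 1, 0 ≤ h r := by
    by_contra hcon
    push_neg at hcon
    obtain ⟨c, hc, hcneg⟩ := hcon
    have hc0 : (0:ℝ) < c := by
      rcases lt_or_eq_of_le hc.1 with hlt | heqc
      · exact hlt
      · exfalso; rw [← heqc, h0] at hcneg; linarith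
    have hc1 : c < 1 := by
      rcases lt_or_eq_of_le hc.2 with hlt | heqc
      · exact hlt
      · exfalso; rw [heqc, h1] at hcneg; linarith
    -- zero to the left of c
    have hsubL : Icc (0:ℝ) c ⊆ Icc 0 1 := Icc_subset_Icc le_rfl hc.2
    have hsubR : Icc c 1 ⊆ Icc 0 1 := Icc_subset_Icc hc.1 le_rfl
    have hIVT1 : (0:ℝ) ∈ h '' Icc 0 c := by
      apply intermediate_value_Icc' hc.1 (hcont.mono hsubL)
      rw [h0]; exact ⟨le_of_lt hcneg, zero_le_one⟩
    set Z : Set ℝ := Icc 0 c ∩ h ⁻¹' {0} with hZdef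
    have hZclosed : IsClosed Z :=
      (hcont.mono hsubL).preimage_isClosed_of_isClosed isClosed_Icc isClosed_singleton
    have hZne : Z.Nonempty := by
      obtain ⟨x, hx, hx0⟩ := hIVT1
      exact ⟨x, hx, by simpa using hx0⟩
    have hZbdd : BddAbove Z := ⟨c, fun x hx => hx.1.2⟩
    set s := sSup Z with hsdef
    have hsZ : s ∈ Z := hZclosed.csSup_mem hZne hZbdd
    have hs0 : h s = 0 := hsZ.2
    have hsc : s < c := lt_of_le_of_ne hsZ.1.2 (by
      intro hsc; rw [hsc] at hs0; linarith)
    have hsge : 0 ≤ s := hsZ.1.1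
    -- zero to the right of c
    have hIVT2 : (0:ℝ) ∈ h '' Icc c 1 := by
      apply intermediate_value_Icc hc.2 (hcont.mono hsubR)
      rw [h1]; exact ⟨le_of_lt hcneg, le_rfl⟩
    set W : Set ℝ := Icc c 1 ∩ h ⁻¹' {0} with hWdef
    have hWclosed : IsClosed W :=
      (hcont.mono hsubR).preimage_isClosed_of_isClosed isClosed_Icc isClosed_singleton
    have hWne : W.Nonempty := by
      obtain ⟨x, hx, hx0⟩ := hIVT2
      exact ⟨x, hx, by simpa using hx0⟩
    have hWbdd : BddBelow W := ⟨c, fun x hx => hx.1.1⟩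
    set b := sInf W with hbdef
    have hbW : b ∈ W := hWclosed.csInf_mem hWne hWbdd
    have hb0 : h b = 0 := hbW.2
    have hcb : c < b := lt_of_le_of_ne hbW.1.1 (by
      intro hbc; rw [← hbc] at hb0; linarith)
    have hble : b ≤ 1 := hbW.1.2
    have hsb : s < b := hsc.trans hcb
    have hsub2 : Icc s b ⊆ Icc 0 1 := Icc_subset_Icc hsge hble
    -- h ≤ 0 on [s, b]
    have hle0 : ∀ r ∈ Icc s b, h r ≤ 0 := by
      intro r hr
      by_contra hpos
      push_neg at hpos
      rcases le_or_gt r c with hrc | hcr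
      · -- h r > 0, s < r ≤ c ; IVT on [r, c] gives a zero > s
        have hsr : s < r := by
          rcases lt_or_eq_of_le hr.1 with hlt | heqr
          · exact hlt
          · exfalso; rw [← heqr, hs0] at hpos; linarith
        have : (0:ℝ) ∈ h '' Icc r c := by
          apply intermediate_value_Icc' hrc
            (hcont.mono (Icc_subset_Icc (hsge.trans hsr.le) hc.2))
          exact ⟨hcneg.le, hpos.le⟩
        obtain ⟨x, hx, hx0⟩ := this
        have hxZ : x ∈ Z := ⟨⟨(hsge.trans hsr.le).trans hx.1, hx.2⟩, by simpa using hx0⟩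
        have := le_csSup hZbdd hxZ
        linarith [hsr.trans_le hx.1]
      · -- h r > 0, c < r ≤ b ; IVT on [c, r] gives a zero < b
        have hrb : r < b := by
          rcases lt_or_eq_of_le hr.2 with hlt | heqr
          · exact hlt
          · exfalso; rw [heqr, hb0] at hpos; linarith
        have : (0:ℝ) ∈ h '' Icc c r := by
          apply intermediate_value_Icc hcr.le
            (hcont.mono (Icc_subset_Icc hc.1 (hrb.le.trans hble)))
          exact ⟨hcneg.le, hpos.le⟩
        obtain ⟨x, hx, hx0⟩ := this
        have hxW : x ∈ W := ⟨⟨hx.1, (hx.2.trans hrb.le).trans hble⟩, by simpa using hx0⟩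
        have := csInf_le hWbdd hxW
        linarith [lt_of_le_of_lt hx.2 hrb]
    -- h is concave on [s, b]
    have hconc : ConcaveOn ℝ (Icc s b) h := by
      have hint : interior (Icc s b) = Ioo s b := interior_Icc
      apply concaveOn_of_hasDerivWithinAt2_nonpos (convex_Icc s b)
        (hcont.mono hsub2) (f' := h') (f'' := h'')
      · intro x hx
        rw [hint] at hx
        exact (hdh x ⟨lt_of_le_of_lt hsge hx.1, lt_of_lt_of_le hx.2 hble⟩).hasDerivWithinAt
      · intro x hx
        rw [hint] at hx
        exact (hdh' x ⟨lt_of_le_of_lt hsge hx.1, lt_of_lt_of_le hx.2 hble⟩).hasDerivWithinAt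
      · intro x hx
        rw [hint] at hx
        have hx' : x ∈ Icc (0:ℝ) 1 := hsub2 (Ioo_subset_Icc_self hx)
        rw [heq' x hx']
        nlinarith [hKneg x hx', hle0 x (Ioo_subset_Icc_self hx)]
    -- contradiction: concavity forces h c ≥ 0
    have hsmem : s ∈ Icc s b := left_mem_Icc.2 hsb.le
    have hbmem : b ∈ Icc s b := right_mem_Icc.2 hsb.le
    have hba : (0:ℝ) < b - s := by linarith
    have key := hconc.2 hsmem hbmem
      (div_nonneg (by linarith : (0:ℝ) ≤ b - c) hba.le)
      (div_nonneg (by linarith : (0:ℝ) ≤ c - s) hba.le)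
      (by rw [← add_div, div_eq_one_iff_eq hba.ne']; ring)
    have hcomb : ((b - c)/(b - s)) • s + ((c - s)/(b - s)) • b = c := by
      simp only [smul_eq_mul]; rw [div_mul_eq_mul_div, div_mul_eq_mul_div, ← add_div, div_eq_iff hba.ne']
      ring
    rw [hcomb, hs0, hb0] at key
    simp at key
    linarith
  -- Step 2: h is convex on [0,1]
  have hconv : ConvexOn ℝ (Icc (0:ℝ) 1) h := by
    apply convexOn_of_hasDerivWithinAt2_nonneg (convex_Icc 0 1)
      hcont (f' := h') (f'' := h'')
    · intro x hx
      rw [interior_Icc] at hx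
      exact (hdh x hx).hasDerivWithinAt
    · intro x hx
      rw [interior_Icc] at hx
      exact (hdh' x hx).hasDerivWithinAt
    · intro x hx
      rw [interior_Icc] at hx
      have hx' : x ∈ Icc (0:ℝ) 1 := Ioo_subset_Icc_self hx
      rw [heq' x hx']
      have := mul_nonpos_of_nonpos_of_nonneg (hKneg x hx') (hnonneg x hx')
      linarith
  -- Step 3: h r ≤ 1 - r
  have hub : ∀ r ∈ Icc (0:ℝ) 1, h r ≤ 1 - r := by
    intro r hr
    have key := hconv.2 (left_mem_Icc.2 zero_le_one) (right_mem_Icc.2 zero_le_one)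
      (by linarith [hr.2] : (0:ℝ) ≤ 1 - r) hr.1 (by ring)
    simp only [smul_eq_mul, mul_zero, mul_one, zero_add] at key
    rw [h0, h1] at key
    simpa using key
  have hslope := hasDerivWithinAt_iff_tendsto_slope.1 (hh 1 (right_mem_Icc.2 zero_le_one))
  have hsetEq : Icc (0:ℝ) 1 \ {1} = Ico 0 1 := Icc_sdiff_right
  rw [hsetEq] at hslope
  haveI hne : (𝓝[Ico (0:ℝ) 1] 1).NeBot := by
    apply mem_closure_iff_nhdsWithin_neBot.1
    rw [closure_Ico (by norm_num : (0:ℝ) ≠ 1)]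
    exact ⟨zero_le_one, le_rfl⟩
  have hslopeq : ∀ r ∈ Ico (0:ℝ) 1, slope h 1 r = h r / (r - 1) := by
    intro r hr
    rw [slope_def_field, h1]
    ring_nf
  refine ⟨fun r hr => ⟨hnonneg r hr, hub r hr⟩, ?_, ?_⟩
  · -- -1 ≤ h' 1
    refine ge_of_tendsto hslope ?_
    apply Filter.eventually_of_mem self_mem_nhdsWithin
    intro r hr
    have hr1 : r - 1 < 0 := by linarith [hr.2]
    have hhr : h r ≤ 1 - r := hub r (Ico_subset_Icc_self hr)
    rw [hslopeq r hr, le_div_iff_of_neg hr1]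
    linarith
  · -- h' 1 ≤ 0
    refine le_of_tendsto hslope ?_
    apply Filter.eventually_of_mem self_mem_nhdsWithin
    intro r hr
    have hr1 : r - 1 < 0 := by linarith [hr.2]
    have hhr : 0 ≤ h r := hnonneg r (Ico_subset_Icc_self hr)
    rw [hslopeq r hr]
    exact div_nonpos_of_nonneg_of_nonpos hhr hr1.le
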